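/- Let λ be a partition of e-weight w with z(λ) = (z₁, ..., z_w). Then λ is e-regular (no e consecutive equal nonzero parts) if and only if zᵢ > 0 for all i ∈ {1, ..., w}. -/

import Mathlib

/-- The set of β-numbers of a partition given by its (0-indexed) parts function. -/
def betaSet (lam : ℕ → ℕ) : Set ℤ :=
  {x : ℤ | ∃ i : ℕ, x = (lam i : ℤ) - ((i : ℤ) + 1)}

/-- `wt e B b`: number of unoccupied positions above `b` on its runner. -/
noncomputable def wt (e : ℕ) (B : Set ℤ) (b : ℤ) : ℕ :=
  Set.ncard {x : ℤ | x < b ∧ (e : ℤ) ∣ b - x ∧ x ∉ B}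

/-- `(b; q)` is a bead movement: `b ∈ B`, `q = b - i·e` for some `0 ≤ i < wt e B b`. -/
def IsBM (e : ℕ) (B : Set ℤ) (b q : ℤ) : Prop :=
  b ∈ B ∧ ∃ i : ℕ, q = b - (i : ℤ) * e ∧ i < wt e B b

/-- The armlength of a bead movement starting at `q`. -/
noncomputable def zOf (e : ℕ) (B : Set ℤ) (q : ℤ) : ℕ :=
  Set.ncard {t : ℤ | q - e < t ∧ t ≤ q ∧ t ∉ B}

namespace S19

def bt (lam : ℕ → ℕ) (j : ℕ) : ℤ := (lam j : ℤ) - ((j : ℤ) + 1)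

lemma bt_mem (lam : ℕ → ℕ) (j : ℕ) : bt lam j ∈ betaSet lam := ⟨j, rfl⟩

lemma bt_strictAnti (lam : ℕ → ℕ) (hanti : Antitone lam) : StrictAnti (bt lam) := by
  intro m n hmn
  have h1 : lam n ≤ lam m := hanti hmn.le
  simp only [bt]
  omega

lemma le_of_mem_lt {lam : ℕ → ℕ} (hanti : Antitone lam) {x : ℤ} {j : ℕ}
    (hx : x ∈ betaSet lam) (hlt : x < bt lam j) : x ≤ bt lam (j + 1) := by
  obtain ⟨m, rfl⟩ := hx
  change bt lam m < bt lam j at hlt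
  rcases le_or_gt m j with h | h
  · exact absurd hlt (not_lt.2 ((bt_strictAnti lam hanti).antitone h))
  · exact (bt_strictAnti lam hanti).antitone (by omega : j + 1 ≤ m)

lemma run {lam : ℕ → ℕ} (hanti : Antitone lam) {j : ℕ} {q : ℤ} (hq : bt lam j = q) :
    ∀ k : ℕ, (∀ k' : ℕ, k' ≤ k → q - (k' : ℤ) ∈ betaSet lam) → bt lam (j + k) = q - (k : ℤ)
  | 0, _ => by simpa using hq
  | (k+1), h => by
      have ih := run hanti hq k (fun k' hk' => h k' (by omega))
      have h1 : q - ((k+1 : ℕ) : ℤ) ∈ betaSet lam := h (k+1) le_rfl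
      have h2 : q - ((k+1:ℕ) : ℤ) < bt lam (j + k) := by rw [ih]; push_cast; omega
      have h3 := le_of_mem_lt hanti h1 h2
      have h4 : bt lam (j + k + 1) < bt lam (j + k) :=
        bt_strictAnti lam hanti (by omega)
      rw [ih] at h4
      have : j + (k + 1) = j + k + 1 := by omega
      rw [this]
      push_cast at h3 ⊢
      omega

lemma mem_of_le_neg {lam : ℕ → ℕ} (hanti : Antitone lam) {j : ℕ} (h0 : lam j = 0)
    {x : ℤ} (hx : x ≤ -(j : ℤ) - 1) : x ∈ betaSet lam := by
  set n := (-x - 1).toNat with hn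
  have hn' : (n : ℤ) = -x - 1 := Int.toNat_of_nonneg (by omega)
  have hjn : j ≤ n := by omega
  have h0n : lam n = 0 := Nat.le_zero.1 (h0 ▸ hanti hjn)
  exact ⟨n, by rw [h0n]; omega⟩

end S19

open S19 in
/-- A partition is `e`-regular iff every component of `z(λ)` is positive, i.e.
iff every bead movement of `λ` has positive armlength. -/
theorem stmt_19 (e : ℕ) (he : 2 ≤ e) (lam : ℕ → ℕ)
    (hanti : Antitone lam) (hev : ∃ N, ∀ i ≥ N, lam i = 0) :
    (¬ ∃ i : ℕ, lam i ≠ 0 ∧ ∀ k < e, lam (i + k) = lam i) ↔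
      ∀ b q : ℤ, IsBM e (betaSet lam) b q → 0 < zOf e (betaSet lam) q := by
  obtain ⟨N, hN⟩ := hev
  have hN0 : lam N = 0 := hN N le_rfl
  have he' : (2 : ℤ) ≤ (e : ℤ) := by exact_mod_cast he
  constructor
  · -- regular → all armlengths positive
    intro hreg b q hbm
    obtain ⟨hbB, i, hq, hiw⟩ := hbm
    by_contra hz
    have hz0 : zOf e (betaSet lam) q = 0 := by omega
    -- the arm interval is fully occupied
    have hfinQ : Set.Finite {t : ℤ | q - e < t ∧ t ≤ q ∧ t ∉ betaSet lam} :=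
      (Set.finite_Ioc (q - (e:ℤ)) q).subset (fun t ht => ⟨ht.1, ht.2.1⟩)
    have hempty : {t : ℤ | q - e < t ∧ t ≤ q ∧ t ∉ betaSet lam} = ∅ :=
      (Set.ncard_eq_zero hfinQ).1 hz0
    have hmem : ∀ t : ℤ, q - e < t → t ≤ q → t ∈ betaSet lam := by
      intro t h1 h2
      by_contra h3
      exact Set.notMem_empty t (hempty ▸ (⟨h1, h2, h3⟩ :
        t ∈ {t : ℤ | q - e < t ∧ t ≤ q ∧ t ∉ betaSet lam}))
    obtain ⟨j, hj⟩ := hmem q (by omega) le_rfl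
    have hjq : bt lam j = q := hj.symm
    -- there is a gap strictly below q
    have hgap : ∃ g : ℤ, g < q ∧ g ∉ betaSet lam := by
      by_contra h
      push_neg at h
      have hsub : {x : ℤ | x < b ∧ (e:ℤ) ∣ b - x ∧ x ∉ betaSet lam} ⊆
          (fun m : ℕ => b - (m:ℤ) * e) '' (Set.Icc 1 i) := by
        intro x hx
        obtain ⟨hx1, ⟨m', hm'⟩, hx3⟩ := hx
        have hxq : q ≤ x := by
          by_contra hc
          exact hx3 (h x (by omega))
        have hm1 : (1 : ℤ) ≤ m' := by nlinarith
        have hm2 : m' ≤ (i : ℤ) := by nlinarith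
        refine ⟨m'.toNat, ⟨by omega, by omega⟩, ?_⟩
        have h5 : ((m'.toNat : ℕ) : ℤ) = m' := Int.toNat_of_nonneg (by omega)
        simp only [h5]
        have h6 : m' * (e:ℤ) = (e:ℤ) * m' := mul_comm _ _
        linarith
      have hc1 : ({x : ℤ | x < b ∧ (e:ℤ) ∣ b - x ∧ x ∉ betaSet lam}).ncard ≤
          ((fun m : ℕ => b - (m:ℤ) * e) '' (Set.Icc 1 i)).ncard :=
        Set.ncard_le_ncard hsub ((Set.finite_Icc 1 i).image _)
      have hc2 : ((fun m : ℕ => b - (m:ℤ) * e) '' (Set.Icc 1 i)).ncard ≤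
          (Set.Icc 1 i).ncard := Set.ncard_image_le (Set.finite_Icc 1 i)
      have hc3 : (Set.Icc (1:ℕ) i).ncard = i := by
        rw [← Finset.coe_Icc, Set.ncard_coe_finset, Nat.card_Icc]
        omega
      rw [wt] at hiw
      omega
    obtain ⟨g, hg1, hg2⟩ := hgap
    -- the witness for singularity
    refine hreg ⟨j, ?_, ?_⟩
    · -- lam j ≠ 0
      intro h0
      have hqval : q = -(j:ℤ) - 1 := by
        rw [← hjq, bt, h0]; push_cast; ring
      exact hg2 (mem_of_le_neg hanti h0 (by omega))
    · intro k hk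
      have hrk : bt lam (j + k) = q - (k : ℤ) :=
        run hanti hjq k (fun k' hk' => hmem _ (by omega) (by omega))
      have h1 : (lam (j + k) : ℤ) - ((j:ℤ) + (k:ℤ) + 1) = q - k := by
        rw [← hrk, bt]; push_cast; ring
      have h2 : (lam j : ℤ) - ((j:ℤ) + 1) = q := hjq ▸ rfl
      omega
  · -- all armlengths positive → regular
    intro hpos hsing
    obtain ⟨i, hi0, hie⟩ := hsing
    set b := bt lam i with hbdef
    have hbB : b ∈ betaSet lam := bt_mem lam i
    have hrun : ∀ k : ℕ, k < e → b - (k:ℤ) ∈ betaSet lam := by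
      intro k hk
      refine ⟨i + k, ?_⟩
      have hc : (lam (i + k) : ℤ) = (lam i : ℤ) := by rw [hie k hk]
      simp only [hbdef, bt]
      push_cast
      omega
    -- there is a gap below b
    have hGne : ∃ g : ℤ, g < b ∧ g ∉ betaSet lam := by
      by_contra h
      push_neg at h
      have hall : bt lam (i + N) = b - (N : ℤ) := by
        refine run hanti rfl N (fun k' hk' => ?_)
        rcases Nat.eq_zero_or_pos k' with h0 | h0
        · subst h0; simpa using hbB
        · exact h _ (by omega)
      have h0 : lam (i + N) = 0 := hN _ (by omega)
      rw [bt, h0] at hall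
      simp only [hbdef, bt] at hall
      push_cast at hall
      omega
    have hgapbd : ∀ x : ℤ, x ∉ betaSet lam → -(N:ℤ) - 1 < x := by
      intro x hx
      by_contra hc
      exact hx (mem_of_le_neg hanti hN0 (by omega))
    have hGfin : Set.Finite {x : ℤ | x < b ∧ x ∉ betaSet lam} :=
      (Set.finite_Ioo (-(N:ℤ) - 1) b).subset (fun x hx => ⟨hgapbd x hx.2, hx.1⟩)
    obtain ⟨g, hgG, hgmax⟩ := Set.Finite.exists_maximalFor id _ hGfin hGne
    obtain ⟨hgb, hgB⟩ := hgG
    -- everything in (g, b] is occupied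
    have hup : ∀ x : ℤ, g < x → x ≤ b → x ∈ betaSet lam := by
      intro x h1 h2
      rcases eq_or_lt_of_le h2 with h3 | h3
      · exact h3 ▸ hbB
      · by_contra h4
        have h5 := @hgmax x ⟨h3, h4⟩ h1.le
        simp only [id_eq] at h5
        omega
    -- g is at least e below b
    have hge : g ≤ b - e := by
      by_contra hc
      push_neg at hc
      have h1 : g = b - (((b - g).toNat : ℕ) : ℤ) := by omega
      have h2 : (b - g).toNat < e := by omega
      exact hgB (h1 ▸ hrun _ h2)
    set c := g + (e : ℤ) with hcdef
    have hcB : c ∈ betaSet lam := hup c (by omega) (by omega)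
    have hcwt : 0 < wt e (betaSet lam) c := by
      have hWfin : Set.Finite {x : ℤ | x < c ∧ (e:ℤ) ∣ c - x ∧ x ∉ betaSet lam} :=
        (Set.finite_Ioo (-(N:ℤ) - 1) c).subset (fun x hx => ⟨hgapbd x hx.2.2, hx.1⟩)
      rw [wt, Set.ncard_pos hWfin]
      exact ⟨g, by omega, ⟨1, by ring⟩, hgB⟩
    have hbm : IsBM e (betaSet lam) c c := ⟨hcB, 0, by simp, hcwt⟩
    have := hpos c c hbm
    have hzero : {t : ℤ | c - e < t ∧ t ≤ c ∧ t ∉ betaSet lam} = ∅ := by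
      apply Set.eq_empty_iff_forall_notMem.2
      intro t ht
      obtain ⟨ht1, ht2, ht3⟩ := ht
      exact ht3 (hup t (by omega) (by omega))
    rw [zOf, hzero, Set.ncard_empty] at this
    omega
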